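/- Let a, b, c be integers with gcd(a,b,c) = 1. Then for all integers x, y with gcd(x,y) = 1, the integer gcd(a·x + b·y, c·y) divides a·c. -/

import Mathlib

theorem gcd_dvd_ac (a b c : ℤ) (habc : Int.gcd (Int.gcd a b) c = 1)
    (x y : ℤ) (hxy : Int.gcd x y = 1) :
    (Int.gcd (a * x + b * y) (c * y) : ℤ) ∣ a * c := by
  set d : ℤ := (Int.gcd (a * x + b * y) (c * y) : ℤ) with hd
  have h1 : d ∣ a * x + b * y := Int.gcd_dvd_left _ _
  have h2 : d ∣ c * y := Int.gcd_dvd_right _ _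
  have hx : d ∣ a * c * x := by
    have h := Dvd.dvd.sub (h1.mul_left c) (h2.mul_left b)
    have e : c * (a * x + b * y) - b * (c * y) = a * c * x := by ring
    rwa [e] at h
  have hy : d ∣ a * c * y := by
    have h := h2.mul_left a
    rwa [show a * (c * y) = a * c * y by ring] at h
  have h := Int.dvd_coe_gcd hx hy
  rw [Int.gcd_mul_left, hxy, mul_one] at h
  exact Int.dvd_natAbs.mp h
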